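/- Per-step contraction of the expected Q-values (key inequality in the proof of Lemma 4): suppose additionally that p q ≥ p_min for all q for some p_min > 0, and that Q_0 = κ • c* with κ ≥ 1. Then there exists μ > 0 (independent of i) such that for every i : ℕ, ∑_q (Q_{i+1} q − c* q) ≤ (1 − μ * p_min * λ i) * ∑_q (Q_i q − c* q). -/

import Mathlib

open Filter Matrix

/-- Per-step contraction of the expected Q-values (key inequality in the proof
of Lemma 4): if each entry is updated with probability at least `p_min > 0` and
`Q 0 = κ • c*` with `κ ≥ 1`, there is `μ > 0` such that the total gap to `c*`
shrinks by the factor `1 - μ * p_min * λ i` at each step `i`. -/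
theorem expected_q_values_contraction {n : ℕ}
    (B : Matrix (Fin n) (Fin n) ℝ) (hB : ∀ i j, 0 ≤ B i j)
    (hpow : ∀ i j, Tendsto (fun k => (B ^ k) i j) atTop (nhds 0))
    (c : Fin n → ℝ) (hc : ∀ i, 0 < c i)
    (cstar : Fin n → ℝ) (hcstar : cstar = B.mulVec cstar + c)
    (lam : ℕ → ℝ) (hlam : ∀ i, 0 ≤ lam i ∧ lam i ≤ 1)
    (p : Fin n → ℝ) (hp : ∀ q, 0 < p q ∧ p q ≤ 1)
    (pmin : ℝ) (hpmin : 0 < pmin) (hppmin : ∀ q, pmin ≤ p q)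
    (Q : ℕ → Fin n → ℝ)
    (hQ : ∀ i q, Q (i + 1) q
      = (1 - lam i * p q) * Q i q + lam i * p q * (B.mulVec (Q i) + c) q)
    (κ : ℝ) (hκ : 1 ≤ κ) (hQ0 : Q 0 = κ • cstar) :
    ∃ μ : ℝ, 0 < μ ∧
      ∀ i, ∑ q, (Q (i + 1) q - cstar q)
        ≤ (1 - μ * pmin * lam i) * ∑ q, (Q i q - cstar q) := by
  classical
  -- gap and residual
  set D : ℕ → Fin n → ℝ := fun i q => Q i q - cstar q with hDdef
  set w : ℕ → Fin n → ℝ := fun i q => D i q - B.mulVec (D i) q with hwdef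
  have hc2 : ∀ q, cstar q = B.mulVec cstar q + c q := by
    intro q
    have := congrFun hcstar q
    simpa using this
  -- recursion for D
  have hDrec : ∀ i q, D (i + 1) q = D i q - lam i * (p q * w i q) := by
    intro i q
    have h1 : B.mulVec (D i) q = B.mulVec (Q i) q - B.mulVec cstar q := by
      simp [hDdef, Matrix.mulVec, dotProduct, mul_sub, Finset.sum_sub_distrib]
    simp only [hwdef, hDdef]
    rw [hQ i q]
    simp only [Pi.add_apply]
    simp only [hDdef] at h1
    rw [h1]
    linear_combination (-(lam i * p q)) * hc2 q
  -- recursion for w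
  have hwrec : ∀ i q, w (i + 1) q
      = (1 - lam i * p q) * w i q
        + lam i * B.mulVec (fun r => p r * w i r) q := by
    intro i q
    have hD1 : B.mulVec (D (i + 1)) q
        = B.mulVec (D i) q - lam i * B.mulVec (fun r => p r * w i r) q := by
      calc B.mulVec (D (i + 1)) q
          = ∑ r, (B q r * D i r - lam i * (B q r * (p r * w i r))) := by
            simp only [Matrix.mulVec, dotProduct]
            exact Finset.sum_congr rfl (fun r _ => by rw [hDrec i r]; ring)
        _ = B.mulVec (D i) q - lam i * B.mulVec (fun r => p r * w i r) q := by
            simp only [Matrix.mulVec, dotProduct, Finset.sum_sub_distrib,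
              Finset.mul_sum]
    simp only [hwdef]
    rw [hDrec i q, hD1]
    ring
  -- nonnegativity of w
  have hwpos : ∀ i q, 0 ≤ w i q := by
    intro i
    induction i with
    | zero =>
      intro q
      have hD0 : ∀ r, D 0 r = (κ - 1) * cstar r := by
        intro r
        simp only [hDdef, hQ0, Pi.smul_apply, smul_eq_mul]
        ring
      have : w 0 q = (κ - 1) * c q := by
        simp only [hwdef]
        rw [hD0 q]
        have : B.mulVec (D 0) q = (κ - 1) * B.mulVec cstar q := by
          have h : D 0 = fun r => (κ - 1) * cstar r := funext hD0
          rw [h]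
          simp [Matrix.mulVec, dotProduct, Finset.mul_sum]
          exact Finset.sum_congr rfl (fun r _ => by ring)
        rw [this]
        linear_combination (κ - 1) * hc2 q
      rw [this]
      have := (hc q).le
      nlinarith
    | succ k ih =>
      intro q
      rw [hwrec k q]
      have h1 : 0 ≤ 1 - lam k * p q := by
        have := (hlam k).1; have := (hlam k).2; have := (hp q).1; have := (hp q).2
        nlinarith
      have h2 : 0 ≤ B.mulVec (fun r => p r * w k r) q := by
        simp only [Matrix.mulVec, dotProduct]
        apply Finset.sum_nonneg
        intro r _
        exact mul_nonneg (hB q r) (mul_nonneg (hp r).1.le (ih r))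
      exact add_nonneg (mul_nonneg h1 (ih q)) (mul_nonneg (hlam k).1 h2)
  -- construct the weight vector y with (1 - Bᵀ) y = 1
  obtain ⟨y, hy⟩ : ∃ y : Fin n → ℝ,
      ((1 : Matrix (Fin n) (Fin n) ℝ) - Bᵀ).mulVec y = fun _ => 1 := by
    have hinj : Function.Injective
        (Matrix.mulVecLin ((1 : Matrix (Fin n) (Fin n) ℝ) - Bᵀ)) := by
      rw [← LinearMap.ker_eq_bot, LinearMap.ker_eq_bot']
      intro x hx
      have hx' : Bᵀ.mulVec x = x := by
        have : x - Bᵀ.mulVec x = 0 := by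
          have := hx
          simpa only [Matrix.mulVecLin_apply, Matrix.sub_mulVec, Matrix.one_mulVec] using hx
        have := sub_eq_zero.mp this
        exact this.symm
      have hiter : ∀ k, ((Bᵀ) ^ k).mulVec x = x := by
        intro k
        induction k with
        | zero => simp [Matrix.one_mulVec]
        | succ m ihm =>
          rw [pow_succ, ← Matrix.mulVec_mulVec, hx', ihm]
      funext q
      have htend : Tendsto (fun k => (((Bᵀ) ^ k).mulVec x) q) atTop (nhds 0) := by
        have : ∀ k, (((Bᵀ) ^ k).mulVec x) q = ∑ r, (B ^ k) r q * x r := by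
          intro k
          simp [Matrix.mulVec, dotProduct, ← Matrix.transpose_pow,
            Matrix.transpose_apply]
        rw [show (fun k => (((Bᵀ) ^ k).mulVec x) q)
            = fun k => ∑ r, (B ^ k) r q * x r from funext this]
        have h0 : (0 : ℝ) = ∑ _r : Fin n, (0 : ℝ) := by simp
        rw [h0]
        exact tendsto_finset_sum _ (fun r _ => by simpa using (hpow r q).mul_const (x r))
      have hconst : ∀ k, (((Bᵀ) ^ k).mulVec x) q = x q := fun k => by rw [hiter k]
      have : Tendsto (fun _ : ℕ => x q) atTop (nhds 0) := by
        rwa [show (fun _ : ℕ => x q) = fun k => (((Bᵀ) ^ k).mulVec x) q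
          from funext fun k => (hconst k).symm]
      simpa using (tendsto_nhds_unique this tendsto_const_nhds).symm
    have hsurj := (LinearMap.injective_iff_surjective).mp hinj
    obtain ⟨y, hy⟩ := hsurj (fun _ => 1)
    exact ⟨y, hy⟩
  have hy' : ∀ r, (∑ q, B q r * y q) = y r - 1 := by
    intro r
    have := congrFun hy r
    simp only [Matrix.sub_mulVec, Matrix.one_mulVec, Pi.sub_apply] at this
    have h2 : Bᵀ.mulVec y r = ∑ q, B q r * y q := by
      simp [Matrix.mulVec, dotProduct, Matrix.transpose_apply]
    rw [← h2]
    linarith [this]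
  -- key identity: ∑ v = ∑ y * (v - Bv)
  have hkey : ∀ v : Fin n → ℝ,
      ∑ q, v q = ∑ q, y q * (v q - B.mulVec v q) := by
    intro v
    have e1 : ∑ q, y q * (v q - B.mulVec v q)
        = ∑ q, y q * v q - ∑ q, ∑ r, y q * (B q r * v r) := by
      simp [Matrix.mulVec, dotProduct, mul_sub, Finset.mul_sum,
        Finset.sum_sub_distrib]
    rw [e1, Finset.sum_comm]
    have e2 : ∀ r, (∑ q, y q * (B q r * v r)) = (y r - 1) * v r := by
      intro r
      have : (∑ q, y q * (B q r * v r)) = (∑ q, B q r * y q) * v r := by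
        rw [Finset.sum_mul]
        exact Finset.sum_congr rfl (fun q _ => by ring)
      rw [this, hy' r]
    rw [Finset.sum_congr rfl (fun r _ => e2 r)]
    rw [Finset.sum_congr rfl (fun r (_ : r ∈ Finset.univ) =>
      (sub_mul (y r) 1 (v r) : (y r - 1) * v r = y r * v r - 1 * v r))]
    rw [Finset.sum_sub_distrib]
    simp
  -- the contraction constant
  set Y : ℝ := 1 + ∑ q, |y q| with hYdef
  have hY1 : 1 ≤ Y := by
    have : 0 ≤ ∑ q, |y q| := Finset.sum_nonneg fun q _ => abs_nonneg _
    simp only [hYdef]; linarith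
  have hYpos : 0 < Y := lt_of_lt_of_le one_pos hY1
  have hyY : ∀ q, y q ≤ Y := by
    intro q
    have h1 : y q ≤ |y q| := le_abs_self _
    have h2 : |y q| ≤ ∑ r, |y r| :=
      Finset.single_le_sum (fun r _ => abs_nonneg (y r)) (Finset.mem_univ q)
    simp only [hYdef]; linarith
  refine ⟨1 / Y, by positivity, fun i => ?_⟩
  -- rewrite both sides in terms of w
  have hsum1 : ∑ q, (Q (i + 1) q - cstar q)
      = ∑ q, (Q i q - cstar q) - lam i * ∑ q, p q * w i q := by
    have : ∀ q, Q (i + 1) q - cstar q = (Q i q - cstar q) - lam i * (p q * w i q) :=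
      fun q => hDrec i q
    rw [Finset.sum_congr rfl (fun q _ => this q), Finset.sum_sub_distrib,
      ← Finset.mul_sum]
  have hsum2 : ∑ q, (Q i q - cstar q) = ∑ q, y q * w i q := hkey (D i)
  have hterm : ∑ q, (1 / Y) * pmin * (y q * w i q) ≤ ∑ q, p q * w i q := by
    apply Finset.sum_le_sum
    intro q _
    have hw := hwpos i q
    have h1 : (1 / Y) * y q ≤ 1 := by
      rw [div_mul_eq_mul_div, div_le_one hYpos]
      simpa using hyY q
    have h2 : pmin ≤ p q := hppmin q
    have h3 := mul_le_mul_of_nonneg_left h1 (mul_nonneg hpmin.le hw)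
    have h4 := mul_le_mul_of_nonneg_right h2 hw
    calc 1 / Y * pmin * (y q * w i q) = pmin * w i q * (1 / Y * y q) := by ring
      _ ≤ pmin * w i q * 1 := h3
      _ = pmin * w i q := by ring
      _ ≤ p q * w i q := h4
  have hlam0 := (hlam i).1
  have hfin : lam i * (∑ q, (1 / Y) * pmin * (y q * w i q))
      ≤ lam i * ∑ q, p q * w i q := mul_le_mul_of_nonneg_left hterm hlam0
  have hms : ∑ q, (1 / Y) * pmin * (y q * w i q)
      = (1 / Y) * pmin * ∑ q, y q * w i q := by rw [Finset.mul_sum]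
  rw [hsum1, hsum2]
  rw [hms] at hfin
  nlinarith [hfin]
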